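/- If an integral flow f of value ρ_N·P exists in G(s), then the induced assignment satisfies the scattering constraint: for every partition p, the set of zones of the nodes assigned to p has cardinality at least ρ_Z. -/

import Mathlib

inductive Vert (P Z N : Type) where
  | src | snk
  | pp (p : P) | pm (p : P)
  | x (p : P) (z : Z)
  | node (n : N)
  deriving DecidableEq, Fintype

variable {P Z N : Type} [Fintype P] [Fintype Z] [Fintype N]
  [DecidableEq P] [DecidableEq Z] [DecidableEq N]

/-- Capacities of the assignment flow graph `G(s)`. -/
def cap (zone : N → Z) (c : N → ℕ) (rN rZ s : ℕ) :
    Vert P Z N → Vert P Z N → ℕ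
  | .src, .pp _ => rZ
  | .src, .pm _ => rN - rZ
  | .pp p, .x q _ => if p = q then 1 else 0
  | .pm p, .x q _ => if p = q then rN - rZ else 0
  | .x _ z, .node n => if zone n = z then 1 else 0
  | .node n, .snk => c n / s
  | _, _ => 0

/-- An integral flow on the graph with capacity function `k`. -/
def IsNFlow (k f : Vert P Z N → Vert P Z N → ℕ) : Prop :=
  (∀ u v, f u v ≤ k u v) ∧
    ∀ v, v ≠ Vert.src → v ≠ Vert.snk → ∑ u, f u v = ∑ u, f v u

/-- The value of a flow: total flow leaving the source. -/
def flowValue (f : Vert P Z N → Vert P Z N → ℕ) : ℕ := ∑ v, f Vert.src v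

/-- a flow of value `ρ_N · P` in `G(s)` induces an assignment satisfying
the scattering constraint: each partition's assigned nodes span at least `ρ_Z` zones. -/
theorem stmt14 (zone : N → Z) (c : N → ℕ) (rN rZ s : ℕ)
    (h1 : 1 ≤ rZ) (h2 : rZ ≤ rN)
    (f : Vert P Z N → Vert P Z N → ℕ)
    (hf : IsNFlow (cap zone c rN rZ s) f)
    (hval : flowValue f = rN * Fintype.card P) :
    ∀ p : P,
      rZ ≤ (((Finset.univ.filter fun n : N =>
        f (Vert.x p (zone n)) (Vert.node n) = 1)).image zone).card := by
  obtain ⟨hcap, hcons⟩ := hf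
  -- Step 1: every arc src → pp q is saturated
  have hsat : ∀ q : P, f Vert.src (Vert.pp q) = rZ := by
    set S : Finset (Vert P Z N) :=
      (Finset.univ.image Vert.pp) ∪ (Finset.univ.image Vert.pm) with hS
    have h0 : ∀ v ∈ (Finset.univ : Finset (Vert P Z N)), v ∉ S → f Vert.src v = 0 := by
      intro v _ hv
      have hle := hcap Vert.src v
      match v with
      | .src => simp [cap] at hle; omega
      | .snk => simp [cap] at hle; omega
      | .node n => simp [cap] at hle; omega
      | .x q z => simp [cap] at hle; omega
      | .pp q => exact absurd (by simp [hS]) hv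
      | .pm q => exact absurd (by simp [hS]) hv
    have hsum : ∑ v ∈ S, f Vert.src v = rN * Fintype.card P := by
      rw [Finset.sum_subset (Finset.subset_univ S) h0]
      simpa [flowValue] using hval
    have hdisj : Disjoint (Finset.univ.image (Vert.pp : P → Vert P Z N))
        (Finset.univ.image (Vert.pm : P → Vert P Z N)) := by
      simp only [Finset.disjoint_left, Finset.mem_image, Finset.mem_univ, true_and,
        not_exists]
      rintro a ⟨q, rfl⟩ r h
      cases h
    have hinjp : ∀ x ∈ (Finset.univ : Finset P), ∀ y ∈ Finset.univ,
        (Vert.pp x : Vert P Z N) = Vert.pp y → x = y := by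
      intro x _ y _ h; exact Vert.pp.inj h
    have hinjm : ∀ x ∈ (Finset.univ : Finset P), ∀ y ∈ Finset.univ,
        (Vert.pm x : Vert P Z N) = Vert.pm y → x = y := by
      intro x _ y _ h; exact Vert.pm.inj h
    have hsum2 : ∑ q : P, (f Vert.src (Vert.pp q) + f Vert.src (Vert.pm q))
        = rN * Fintype.card P := by
      rw [Finset.sum_add_distrib, ← Finset.sum_image hinjp, ← Finset.sum_image hinjm,
        ← Finset.sum_union hdisj]
      exact hsum
    have hbound : ∀ q : P, f Vert.src (Vert.pp q) + f Vert.src (Vert.pm q) = rN := by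
      by_contra hcon
      push_neg at hcon
      obtain ⟨q, hq⟩ := hcon
      have hle : ∀ r ∈ (Finset.univ : Finset P),
          f Vert.src (Vert.pp r) + f Vert.src (Vert.pm r) ≤ rN := by
        intro r _
        have h1' := hcap Vert.src (Vert.pp r)
        have h2' := hcap Vert.src (Vert.pm r)
        simp [cap] at h1' h2'
        omega
      have hlt : ∑ q : P, (f Vert.src (Vert.pp q) + f Vert.src (Vert.pm q))
          < ∑ _q : P, rN := by
        apply Finset.sum_lt_sum hle
        refine ⟨q, Finset.mem_univ q, ?_⟩
        exact lt_of_le_of_ne (hle q (Finset.mem_univ q)) hq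
      rw [hsum2, Finset.sum_const, Finset.card_univ, smul_eq_mul, Nat.mul_comm] at hlt
      exact lt_irrefl _ hlt
    intro q
    have h1' := hcap Vert.src (Vert.pp q)
    have h2' := hcap Vert.src (Vert.pm q)
    simp [cap] at h1' h2'
    have := hbound q
    omega
  intro p
  -- Step 2: rZ = flow out of pp p, spread over distinct x p z arcs
  have hin : ∑ u, f u (Vert.pp p) = f Vert.src (Vert.pp p) := by
    apply Finset.sum_eq_single_of_mem Vert.src (Finset.mem_univ _)
    intro u _ hu
    have hle := hcap u (Vert.pp p)
    match u with
    | .src => exact absurd rfl hu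
    | .snk => simp [cap] at hle; omega
    | .pp q => simp [cap] at hle; omega
    | .pm q => simp [cap] at hle; omega
    | .x q z => simp [cap] at hle; omega
    | .node n => simp [cap] at hle; omega
  have hout : ∑ v, f (Vert.pp p) v = ∑ z : Z, f (Vert.pp p) (Vert.x p z) := by
    have h0 : ∀ v ∈ (Finset.univ : Finset (Vert P Z N)),
        v ∉ Finset.univ.image (Vert.x p : Z → Vert P Z N) → f (Vert.pp p) v = 0 := by
      intro v _ hv
      have hle := hcap (Vert.pp p) v
      match v with
      | .src => simp [cap] at hle; omega
      | .snk => simp [cap] at hle; omega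
      | .pp q => simp [cap] at hle; omega
      | .pm q => simp [cap] at hle; omega
      | .node n => simp [cap] at hle; omega
      | .x q z =>
        by_cases h : p = q
        · subst h; exact absurd (by simp) hv
        · simp [cap, h] at hle; omega
    rw [← Finset.sum_subset (Finset.subset_univ _) h0]
    apply Finset.sum_image
    intro x _ y _ h
    exact (Vert.x.inj h).2
  have hcons_pp := hcons (Vert.pp p) (by simp) (by simp)
  have hkey : ∑ z : Z, f (Vert.pp p) (Vert.x p z) = rZ := by
    rw [← hout, ← hcons_pp, hin, hsat p]
  -- Step 3: the zones receiving a unit from pp p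
  set T : Finset Z := Finset.univ.filter (fun z => f (Vert.pp p) (Vert.x p z) = 1) with hT
  have hTcard : rZ ≤ T.card := by
    have hle : ∑ z : Z, f (Vert.pp p) (Vert.x p z) ≤ T.card := by
      rw [hT, Finset.card_filter]
      apply Finset.sum_le_sum
      intro z _
      have hc := hcap (Vert.pp p) (Vert.x p z)
      simp [cap] at hc
      split <;> omega
    omega
  -- Step 4: T ⊆ image of assigned nodes' zones
  have hsub2 : T ⊆ ((Finset.univ.filter fun n : N =>
      f (Vert.x p (zone n)) (Vert.node n) = 1)).image zone := by
    intro z hz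
    rw [hT, Finset.mem_filter] at hz
    obtain ⟨-, hz1⟩ := hz
    have hc := hcons (Vert.x p z) (by simp) (by simp)
    have houtpos : 0 < ∑ u, f (Vert.x p z) u := by
      rw [← hc]
      calc 0 < f (Vert.pp p) (Vert.x p z) := by omega
        _ ≤ ∑ u, f u (Vert.x p z) :=
          Finset.single_le_sum (f := fun u => f u (Vert.x p z))
            (fun _ _ => Nat.zero_le _) (Finset.mem_univ _)
    obtain ⟨v, -, hv⟩ := Finset.exists_ne_zero_of_sum_ne_zero
      (by omega : ∑ u, f (Vert.x p z) u ≠ 0)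
    have hcv := hcap (Vert.x p z) v
    match v with
    | .src => simp [cap] at hcv; omega
    | .snk => simp [cap] at hcv; omega
    | .pp q => simp [cap] at hcv; omega
    | .pm q => simp [cap] at hcv; omega
    | .x q w => simp [cap] at hcv; omega
    | .node n =>
      have hzn : zone n = z := by
        by_contra h
        simp [cap, h] at hcv
        omega
      subst hzn
      have hf1 : f (Vert.x p (zone n)) (Vert.node n) = 1 := by
        simp [cap] at hcv
        omega
      simp only [Finset.mem_image, Finset.mem_filter, Finset.mem_univ, true_and]
      exact ⟨n, hf1, rfl⟩
  exact le_trans hTcard (Finset.card_le_card hsub2)
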